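/- For all n ≥ 1, Σ_{σ ∈ Av_n(132,231)} q^{inv σ} = (1+q)(1+q^2)⋯(1+q^{n-1}), where Av_n(132,231) is the set of permutations of {1,…,n} avoiding both 132 and 231. -/

import Mathlib

open scoped Classical

/-- `σ` contains the pattern `π`. -/
def permContains {n k : ℕ} (σ : Equiv.Perm (Fin n)) (π : Equiv.Perm (Fin k)) : Prop :=
  ∃ f : Fin k → Fin n, StrictMono f ∧ ∀ i j : Fin k, π i < π j ↔ σ (f i) < σ (f j)

/-- `σ` avoids the pattern `π`. -/
def permAvoids {n k : ℕ} (σ : Equiv.Perm (Fin n)) (π : Equiv.Perm (Fin k)) : Prop :=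
  ¬ permContains σ π

def p123 : Equiv.Perm (Fin 3) := 1
def p132 : Equiv.Perm (Fin 3) := Equiv.swap 1 2
def p213 : Equiv.Perm (Fin 3) := Equiv.swap 0 1
def p231 : Equiv.Perm (Fin 3) := finRotate 3
def p312 : Equiv.Perm (Fin 3) := (finRotate 3)⁻¹
def p321 : Equiv.Perm (Fin 3) := Equiv.swap 0 2

/-- Descent set of a permutation, as a set of (1-based) positions `i` with `a_i > a_{i+1}`. -/
def desSet {n : ℕ} (σ : Equiv.Perm (Fin n)) : Finset ℕ :=
  (Finset.Ico 1 n).filter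
    (fun i => ∀ h : i < n, σ ⟨i, h⟩ < σ ⟨i - 1, Nat.lt_of_le_of_lt (Nat.sub_le i 1) h⟩)

/-- Major index: sum of descent positions. -/
def majIdx {n : ℕ} (σ : Equiv.Perm (Fin n)) : ℕ := ∑ i ∈ desSet σ, i

/-- Number of descents. -/
def desNum {n : ℕ} (σ : Equiv.Perm (Fin n)) : ℕ := (desSet σ).card

/-- Number of inversions. -/
def invNum {n : ℕ} (σ : Equiv.Perm (Fin n)) : ℕ :=
  ((Finset.univ : Finset (Fin n × Fin n)).filter (fun p => p.1 < p.2 ∧ σ p.2 < σ p.1)).card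

section AppDefs

variable {n : ℕ}

/-- append the max value at the end -/
def appEnd (σ : Equiv.Perm (Fin n)) : Equiv.Perm (Fin (n+1)) where
  toFun := Fin.lastCases (Fin.last n) (fun i => (σ i).castSucc)
  invFun := Fin.lastCases (Fin.last n) (fun i => (σ⁻¹ i).castSucc)
  left_inv := by
    intro i
    induction i using Fin.lastCases <;> simp
  right_inv := by
    intro i
    induction i using Fin.lastCases <;> simp

/-- put the max value at the front -/
def appFront (σ : Equiv.Perm (Fin n)) : Equiv.Perm (Fin (n+1)) where
  toFun := Fin.cases (Fin.last n) (fun i => (σ i).castSucc)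
  invFun := Fin.lastCases 0 (fun i => (σ⁻¹ i).succ)
  left_inv := by
    intro i
    induction i using Fin.cases <;> simp
  right_inv := by
    intro i
    induction i using Fin.lastCases <;> simp

@[simp] lemma appEnd_castSucc (σ : Equiv.Perm (Fin n)) (i : Fin n) :
    appEnd σ i.castSucc = (σ i).castSucc := by simp [appEnd]

@[simp] lemma appEnd_last (σ : Equiv.Perm (Fin n)) :
    appEnd σ (Fin.last n) = Fin.last n := by simp [appEnd]

@[simp] lemma appFront_zero (σ : Equiv.Perm (Fin n)) :
    appFront σ 0 = Fin.last n := by simp [appFront]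

@[simp] lemma appFront_succ (σ : Equiv.Perm (Fin n)) (i : Fin n) :
    appFront σ i.succ = (σ i).castSucc := by simp [appFront]

end AppDefs

section Avoidance

variable {n : ℕ}

lemma avoids_appEnd {π : Equiv.Perm (Fin 3)} (hπ : π 2 < π 1)
    {σ : Equiv.Perm (Fin n)} (h : permAvoids σ π) : permAvoids (appEnd σ) π := by
  rintro ⟨f, hf, hpat⟩
  by_cases hlast : f 2 = Fin.last n
  · have h21 := (hpat 2 1).mp hπ
    rw [hlast, appEnd_last] at h21
    exact absurd (Fin.le_last _) (not_le.mpr h21)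
  · have hne : ∀ i : Fin 3, f i ≠ Fin.last n := by
      intro i hi
      rcases lt_or_eq_of_le (show i ≤ 2 by omega) with h2 | h2
      · exact absurd (hi ▸ hf h2) (not_lt.mpr (hi ▸ Fin.le_last (f 2)))
      · exact hlast (h2 ▸ hi)
    refine h ⟨fun i => (f i).castPred (hne i), ?_, ?_⟩
    · intro i j hij
      have := hf hij
      simp only [Fin.lt_def, Fin.coe_castPred]
      exact this
    · intro i j
      rw [hpat i j]
      have hfi : f i = ((f i).castPred (hne i)).castSucc := by simp
      have hfj : f j = ((f j).castPred (hne j)).castSucc := by simp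
      rw [hfi, hfj, appEnd_castSucc, appEnd_castSucc]
      simp only [Fin.lt_def, Fin.coe_castSucc, Fin.coe_castPred]

lemma avoids_appFront {π : Equiv.Perm (Fin 3)} (hπ : π 0 < π 1)
    {σ : Equiv.Perm (Fin n)} (h : permAvoids σ π) : permAvoids (appFront σ) π := by
  rintro ⟨f, hf, hpat⟩
  by_cases hzero : f 0 = 0
  · have h01 := (hpat 0 1).mp hπ
    rw [hzero, appFront_zero] at h01
    exact absurd (Fin.le_last _) (not_le.mpr h01)
  · have hne : ∀ i : Fin 3, f i ≠ 0 := by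
      intro i hi
      rcases eq_or_lt_of_le (show (0:Fin 3) ≤ i from Fin.zero_le i) with h2 | h2
      · exact hzero (h2 ▸ hi)
      · exact absurd (hi ▸ hf h2) (Fin.not_lt_zero _)
    refine h ⟨fun i => (f i).pred (hne i), ?_, ?_⟩
    · intro i j hij
      have := hf hij
      simp only [Fin.lt_def, Fin.coe_pred]
      have h1 := (Fin.pos_iff_ne_zero).mpr (hne i)
      simp only [Fin.lt_def] at this h1
      omega
    · intro i j
      rw [hpat i j]
      have hfi : f i = ((f i).pred (hne i)).succ := by simp
      have hfj : f j = ((f j).pred (hne j)).succ := by simp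
      rw [hfi, hfj, appFront_succ, appFront_succ]
      simp only [Fin.lt_def, Fin.coe_castSucc]

end Avoidance

section Dichotomy

lemma fin3_mk2 (h : 2 < 3) : (⟨2, h⟩ : Fin 3) = 2 := rfl
@[simp] lemma p132_apply_0 : p132 0 = 0 := by decide
@[simp] lemma p132_apply_1 : p132 1 = 2 := by decide
@[simp] lemma p132_apply_2 : p132 2 = 1 := by decide
@[simp] lemma p231_apply_0 : p231 0 = 1 := by decide
@[simp] lemma p231_apply_1 : p231 1 = 2 := by decide
@[simp] lemma p231_apply_2 : p231 2 = 0 := by decide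

variable {n : ℕ}

lemma dichotomy (hn : 1 ≤ n) (τ : Equiv.Perm (Fin (n+1)))
    (h1 : permAvoids τ p132) (h2 : permAvoids τ p231) :
    τ 0 = Fin.last n ∨ τ (Fin.last n) = Fin.last n := by
  by_contra hc
  push_neg at hc
  obtain ⟨h0, hl⟩ := hc
  set m := τ⁻¹ (Fin.last n) with hmdef
  have hm : τ m = Fin.last n := Equiv.apply_symm_apply τ _
  have hm0 : m ≠ 0 := fun h => h0 (h ▸ hm)
  have hml : m ≠ Fin.last n := fun h => hl (h ▸ hm)
  have h0m : (0 : Fin (n+1)) < m := (Fin.pos_iff_ne_zero).mpr hm0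
  have hmlast : m < Fin.last n := lt_of_le_of_ne (Fin.le_last m) hml
  have hτ0 : τ 0 < Fin.last n := lt_of_le_of_ne (Fin.le_last _) h0
  have hτl : τ (Fin.last n) < Fin.last n := lt_of_le_of_ne (Fin.le_last _) hl
  have h0ne : (0 : Fin (n+1)) ≠ Fin.last n := ne_of_lt (lt_trans h0m hmlast)
  have hτne : τ 0 ≠ τ (Fin.last n) := fun h => h0ne (τ.injective h)
  set f : Fin 3 → Fin (n+1) := ![0, m, Fin.last n] with hfdef
  have hf0 : f 0 = 0 := rfl
  have hf1 : f 1 = m := rfl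
  have hf2 : f 2 = Fin.last n := rfl
  have hf : StrictMono f := by
    intro i j hij
    fin_cases i <;> fin_cases j <;>
      first
      | exact absurd hij (by decide)
      | simpa [f] using h0m
      | simpa [f] using hmlast
      | simpa [f] using lt_trans h0m hmlast
  rcases lt_or_gt_of_ne hτne with hlt | hgt
  · refine h1 ⟨f, hf, ?_⟩
    intro i j
    fin_cases i <;> fin_cases j <;>
      simp only [Fin.mk_zero, Fin.mk_one, fin3_mk2, Fin.isValue, hf0, hf1, hf2,
        p132_apply_0, p132_apply_1, p132_apply_2, hm] <;>
      first
      | exact iff_of_false (lt_irrefl _) (lt_irrefl _)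
      | exact iff_of_true (by decide) hτ0
      | exact iff_of_true (by decide) hτl
      | exact iff_of_true (by decide) hlt
      | exact iff_of_false (by decide) (asymm hτ0)
      | exact iff_of_false (by decide) (asymm hτl)
      | exact iff_of_false (by decide) (asymm hlt)
      | exact hτ0
      | exact hτl
      | exact hlt
      | exact asymm hτ0
      | exact asymm hτl
      | exact asymm hlt
  · refine h2 ⟨f, hf, ?_⟩
    intro i j
    fin_cases i <;> fin_cases j <;>
      simp only [Fin.mk_zero, Fin.mk_one, fin3_mk2, Fin.isValue, hf0, hf1, hf2,
        p231_apply_0, p231_apply_1, p231_apply_2, hm] <;>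
      first
      | exact iff_of_false (lt_irrefl _) (lt_irrefl _)
      | exact iff_of_true (by decide) hτ0
      | exact iff_of_true (by decide) hτl
      | exact iff_of_true (by decide) hgt
      | exact iff_of_false (by decide) (asymm hτ0)
      | exact iff_of_false (by decide) (asymm hτl)
      | exact iff_of_false (by decide) (asymm hgt)
      | exact hτ0
      | exact hτl
      | exact hgt
      | exact asymm hτ0
      | exact asymm hτl
      | exact asymm hgt

end Dichotomy

section InvCount

variable {n : ℕ}

lemma invNum_appEnd (σ : Equiv.Perm (Fin n)) : invNum (appEnd σ) = invNum σ := by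
  unfold invNum
  symm
  apply Finset.card_bij (fun p _ => (Fin.castSucc p.1, Fin.castSucc p.2))
  · intro p hp
    simp only [Finset.mem_filter, Finset.mem_univ, true_and] at hp ⊢
    refine ⟨Fin.castSucc_lt_castSucc_iff.mpr hp.1, ?_⟩
    rw [appEnd_castSucc, appEnd_castSucc]
    exact Fin.castSucc_lt_castSucc_iff.mpr hp.2
  · intro p hp q hq h
    simp only [Prod.mk.injEq] at h
    exact Prod.ext (Fin.castSucc_injective n h.1) (Fin.castSucc_injective n h.2)
  · intro p hp
    simp only [Finset.mem_filter, Finset.mem_univ, true_and] at hp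
    have h2 : p.2 ≠ Fin.last n := by
      intro h
      rw [h, appEnd_last] at hp
      exact absurd (Fin.le_last _) (not_le.mpr hp.2)
    have h1 : p.1 ≠ Fin.last n := by
      intro h
      exact absurd (h ▸ hp.1) (not_lt.mpr (h ▸ Fin.le_last p.2))
    refine ⟨((p.1).castPred h1, (p.2).castPred h2), ?_, ?_⟩
    · simp only [Finset.mem_filter, Finset.mem_univ, true_and]
      have e1 : p.1 = ((p.1).castPred h1).castSucc := (Fin.castSucc_castPred _ h1).symm
      have e2 : p.2 = ((p.2).castPred h2).castSucc := (Fin.castSucc_castPred _ h2).symm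
      rw [e1, e2, appEnd_castSucc, appEnd_castSucc] at hp
      exact ⟨Fin.castSucc_lt_castSucc_iff.mp hp.1, Fin.castSucc_lt_castSucc_iff.mp hp.2⟩
    · exact Prod.ext (Fin.castSucc_castPred _ h1) (Fin.castSucc_castPred _ h2)

lemma invNum_appFront (σ : Equiv.Perm (Fin n)) : invNum (appFront σ) = n + invNum σ := by
  unfold invNum
  rw [← Finset.card_filter_add_card_filter_not
    (s := (Finset.univ : Finset (Fin (n+1) × Fin (n+1))).filter
      (fun p => p.1 < p.2 ∧ appFront σ p.2 < appFront σ p.1)) (p := fun p => p.1 = 0)]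
  congr 1
  · -- pairs with first coordinate 0 : there are n of them
    rw [Finset.filter_filter]
    refine Eq.trans ?_ (Finset.card_fin n)
    apply Finset.card_bij (fun p hp => (⟨p.2.val - 1, by
      simp only [Finset.mem_filter, Finset.mem_univ, true_and] at hp
      have h1 := hp.1.1
      rw [Fin.lt_def, hp.2] at h1
      have h3 := p.2.isLt
      simp only [Fin.val_zero] at h1
      omega⟩ : Fin n))
    · intro p hp
      exact Finset.mem_univ _
    · intro p hp q hq h
      simp only [Finset.mem_filter, Finset.mem_univ, true_and] at hp hq
      have hp1 := hp.1.1
      have hq1 := hq.1.1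
      rw [Fin.lt_def, hp.2] at hp1
      rw [Fin.lt_def, hq.2] at hq1
      simp only [Fin.val_zero] at hp1 hq1
      simp only [Fin.mk.injEq] at h
      have h2 : p.2 = q.2 := Fin.ext (by omega)
      have h1 : p.1 = q.1 := hp.2.trans hq.2.symm
      exact Prod.ext h1 h2
    · intro j _
      refine ⟨((0 : Fin (n+1)), j.succ), ?_, ?_⟩
      · simp only [Finset.mem_filter, Finset.mem_univ, true_and]
        refine ⟨⟨Fin.succ_pos j, ?_⟩, trivial⟩
        rw [appFront_succ, appFront_zero]
        exact Fin.castSucc_lt_last _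
      · exact Fin.ext (by simp [Fin.val_succ])
  · -- other pairs: both coordinates positive
    rw [Finset.filter_filter]
    symm
    apply Finset.card_bij (fun (p : Fin n × Fin n) _ => (p.1.succ, p.2.succ))
    · intro p hp
      simp only [Finset.mem_filter, Finset.mem_univ, true_and] at hp ⊢
      refine ⟨⟨Fin.succ_lt_succ_iff.mpr hp.1, ?_⟩, Fin.succ_ne_zero _⟩
      rw [appFront_succ, appFront_succ]
      exact Fin.castSucc_lt_castSucc_iff.mpr hp.2
    · intro a _ b _ h
      rw [Prod.ext_iff] at h ⊢
      exact ⟨Fin.succ_injective n h.1, Fin.succ_injective n h.2⟩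
    · intro p hp
      simp only [Finset.mem_filter, Finset.mem_univ, true_and] at hp
      obtain ⟨⟨h1, h2⟩, h0⟩ := hp
      have h2' : p.2 ≠ 0 := by
        intro h
        rw [h] at h1
        exact Fin.not_lt_zero _ h1
      refine ⟨((p.1).pred h0, (p.2).pred h2'), ?_, ?_⟩
      · simp only [Finset.mem_filter, Finset.mem_univ, true_and]
        have e1 : p.1 = ((p.1).pred h0).succ := (Fin.succ_pred _ h0).symm
        have e2 : p.2 = ((p.2).pred h2').succ := (Fin.succ_pred _ h2').symm
        rw [e1, e2, appFront_succ, appFront_succ] at h2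
        constructor
        · have := h1
          rw [e1, e2] at this
          exact Fin.succ_lt_succ_iff.mp this
        · exact Fin.castSucc_lt_castSucc_iff.mp h2
      · exact Prod.ext (Fin.succ_pred _ h0) (Fin.succ_pred _ h2')

end InvCount

section Lift

variable {n : ℕ}

lemma contains_appEnd {k : ℕ} {π : Equiv.Perm (Fin k)} {σ : Equiv.Perm (Fin n)}
    (h : permContains σ π) : permContains (appEnd σ) π := by
  obtain ⟨f, hf, hp⟩ := h
  refine ⟨fun i => (f i).castSucc, fun i j hij => Fin.castSucc_lt_castSucc_iff.mpr (hf hij), ?_⟩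
  intro i j
  rw [hp i j, appEnd_castSucc, appEnd_castSucc]
  exact (Fin.castSucc_lt_castSucc_iff).symm

lemma contains_appFront {k : ℕ} {π : Equiv.Perm (Fin k)} {σ : Equiv.Perm (Fin n)}
    (h : permContains σ π) : permContains (appFront σ) π := by
  obtain ⟨f, hf, hp⟩ := h
  refine ⟨fun i => (f i).succ, fun i j hij => Fin.succ_lt_succ_iff.mpr (hf hij), ?_⟩
  intro i j
  rw [hp i j, appFront_succ, appFront_succ]
  exact (Fin.castSucc_lt_castSucc_iff).symm

lemma exists_appFront (τ : Equiv.Perm (Fin (n+1))) (h : τ 0 = Fin.last n) :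
    ∃ σ : Equiv.Perm (Fin n), appFront σ = τ := by
  have hne : ∀ i : Fin n, τ i.succ ≠ Fin.last n := by
    intro i hi
    exact Fin.succ_ne_zero i (τ.injective (hi.trans h.symm))
  have hne' : ∀ i : Fin n, τ⁻¹ i.castSucc ≠ 0 := by
    intro i hi
    have h2 := congrArg τ hi
    rw [Equiv.Perm.inv_def, Equiv.apply_symm_apply, h] at h2
    exact Fin.ne_last_of_lt (Fin.castSucc_lt_last i) h2
  refine ⟨⟨fun i => (τ i.succ).castPred (hne i), fun i => (τ⁻¹ i.castSucc).pred (hne' i),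
    ?_, ?_⟩, ?_⟩
  · intro i
    simp only [Fin.castSucc_castPred, Equiv.Perm.inv_def, Equiv.symm_apply_apply, Fin.pred_succ]
  · intro i
    simp only [Fin.succ_pred, Equiv.Perm.inv_def, Equiv.apply_symm_apply, Fin.castPred_castSucc]
  · apply Equiv.ext
    intro i
    induction i using Fin.cases with
    | zero => rw [appFront_zero, h]
    | succ j =>
      rw [appFront_succ]
      show (((τ j.succ).castPred (hne j))).castSucc = τ j.succ
      exact Fin.castSucc_castPred _ _

lemma exists_appEnd (τ : Equiv.Perm (Fin (n+1))) (h : τ (Fin.last n) = Fin.last n) :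
    ∃ σ : Equiv.Perm (Fin n), appEnd σ = τ := by
  have hne : ∀ i : Fin n, τ i.castSucc ≠ Fin.last n := by
    intro i hi
    exact absurd (τ.injective (hi.trans h.symm)) (Fin.ne_last_of_lt (Fin.castSucc_lt_last i))
  have hne' : ∀ i : Fin n, τ⁻¹ i.castSucc ≠ Fin.last n := by
    intro i hi
    have h2 := congrArg τ hi
    rw [Equiv.Perm.inv_def, Equiv.apply_symm_apply, h] at h2
    exact Fin.ne_last_of_lt (Fin.castSucc_lt_last i) h2
  refine ⟨⟨fun i => (τ i.castSucc).castPred (hne i), fun i => (τ⁻¹ i.castSucc).castPred (hne' i),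
    ?_, ?_⟩, ?_⟩
  · intro i
    simp only [Fin.castSucc_castPred, Equiv.Perm.inv_def, Equiv.symm_apply_apply, Fin.castPred_castSucc]
  · intro i
    simp only [Fin.castSucc_castPred, Equiv.Perm.inv_def, Equiv.apply_symm_apply, Fin.castPred_castSucc]
  · apply Equiv.ext
    intro i
    induction i using Fin.lastCases with
    | last => rw [appEnd_last, h]
    | cast j =>
      rw [appEnd_castSucc]
      show (((τ j.castSucc).castPred (hne j))).castSucc = τ j.castSucc
      exact Fin.castSucc_castPred _ _

end Lift

section Step

theorem step (n : ℕ) (hn : 1 ≤ n) (q : ℚ) :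
    ∑ τ ∈ Finset.univ.filter
        (fun τ : Equiv.Perm (Fin (n+1)) => permAvoids τ p132 ∧ permAvoids τ p231),
      q ^ invNum τ
    = (1 + q ^ n) * ∑ σ ∈ Finset.univ.filter
        (fun σ : Equiv.Perm (Fin n) => permAvoids σ p132 ∧ permAvoids σ p231),
      q ^ invNum σ := by
  classical
  set A : Finset (Equiv.Perm (Fin n)) := Finset.univ.filter
    (fun σ : Equiv.Perm (Fin n) => permAvoids σ p132 ∧ permAvoids σ p231) with hA
  have key : ∑ p ∈ (Finset.univ : Finset Bool) ×ˢ A,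
      q ^ invNum (cond p.1 (appFront p.2) (appEnd p.2))
      = ∑ τ ∈ Finset.univ.filter
        (fun τ : Equiv.Perm (Fin (n+1)) => permAvoids τ p132 ∧ permAvoids τ p231),
      q ^ invNum τ := by
    apply Finset.sum_bij (fun p _ => cond p.1 (appFront p.2) (appEnd p.2))
    · rintro ⟨b, σ⟩ hp
      simp only [Finset.mem_product, hA, Finset.mem_filter, Finset.mem_univ, true_and] at hp ⊢
      obtain ⟨h132, h231⟩ := hp
      cases b
      · exact ⟨avoids_appEnd (by decide) h132, avoids_appEnd (by decide) h231⟩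
      · exact ⟨avoids_appFront (by decide) h132, avoids_appFront (by decide) h231⟩
    · rintro ⟨b, σ⟩ hp ⟨b', σ'⟩ hq h
      have hfront_ne_end : ∀ (x y : Equiv.Perm (Fin n)), appFront x ≠ appEnd y := by
        intro x y hxy
        have h0 : appFront x 0 = Fin.last n := appFront_zero x
        have h0' : appEnd y 0 = (y ⟨0, hn⟩).castSucc := by
          have : (0 : Fin (n+1)) = Fin.castSucc ⟨0, hn⟩ := rfl
          rw [this, appEnd_castSucc]
        rw [hxy, h0'] at h0
        exact Fin.ne_last_of_lt (Fin.castSucc_lt_last _) h0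
      cases b <;> cases b' <;> simp only [cond_true, cond_false] at h
      · -- both appEnd
        have : σ = σ' := by
          apply Equiv.ext
          intro i
          have := DFunLike.congr_fun h i.castSucc
          simp only [appEnd_castSucc] at this
          exact Fin.castSucc_injective n this
        rw [this]
      · exact absurd h.symm (hfront_ne_end σ' σ)
      · exact absurd h (hfront_ne_end σ σ')
      · -- both appFront
        have : σ = σ' := by
          apply Equiv.ext
          intro i
          have := DFunLike.congr_fun h i.succ
          simp only [appFront_succ] at this
          exact Fin.castSucc_injective n this
        rw [this]
    · intro τ hτ
      simp only [Finset.mem_filter, Finset.mem_univ, true_and] at hτ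
      obtain ⟨h132, h231⟩ := hτ
      rcases dichotomy hn τ h132 h231 with h | h
      · obtain ⟨σ, hσ⟩ := exists_appFront τ h
        refine ⟨(true, σ), ?_, hσ⟩
        simp only [Finset.mem_product, hA, Finset.mem_filter, Finset.mem_univ, true_and]
        refine ⟨?_, ?_⟩
        · exact fun hc => (hσ ▸ h132) (contains_appFront hc)
        · exact fun hc => (hσ ▸ h231) (contains_appFront hc)
      · obtain ⟨σ, hσ⟩ := exists_appEnd τ h
        refine ⟨(false, σ), ?_, hσ⟩
        simp only [Finset.mem_product, hA, Finset.mem_filter, Finset.mem_univ, true_and]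
        refine ⟨?_, ?_⟩
        · exact fun hc => (hσ ▸ h132) (contains_appEnd hc)
        · exact fun hc => (hσ ▸ h231) (contains_appEnd hc)
    · intro p hp
      rfl
  rw [← key, Finset.sum_product]
  rw [Fintype.sum_bool]
  simp only [cond_true, cond_false]
  have e1 : ∀ σ : Equiv.Perm (Fin n), q ^ invNum (appFront σ) = q ^ n * q ^ invNum σ := by
    intro σ
    rw [invNum_appFront, pow_add]
  have e2 : ∀ σ : Equiv.Perm (Fin n), q ^ invNum (appEnd σ) = q ^ invNum σ := by
    intro σ
    rw [invNum_appEnd]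
  rw [Finset.sum_congr rfl (fun σ _ => e1 σ), Finset.sum_congr rfl (fun σ _ => e2 σ),
    ← Finset.mul_sum]
  ring

end Step

lemma invNum_fin_one (σ : Equiv.Perm (Fin 1)) : invNum σ = 0 := by
  unfold invNum
  rw [Finset.card_eq_zero, Finset.filter_eq_empty_iff]
  rintro ⟨a, b⟩ -
  intro hc
  exact absurd (Subsingleton.elim a b) (ne_of_lt hc.1)

theorem inv_132_231 (n : ℕ) (hn : 1 ≤ n) (q : ℚ) :
    ∑ σ ∈ Finset.univ.filter
        (fun σ : Equiv.Perm (Fin n) => permAvoids σ p132 ∧ permAvoids σ p231),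
      q ^ invNum σ = ∏ i ∈ Finset.range (n - 1), (1 + q ^ (i + 1)) := by
  induction n, hn using Nat.le_induction with
  | base =>
    simp only [Nat.sub_self, Finset.range_zero, Finset.prod_empty]
    have hfil : (Finset.univ.filter
        (fun σ : Equiv.Perm (Fin 1) => permAvoids σ p132 ∧ permAvoids σ p231))
        = Finset.univ := by
      apply Finset.filter_true_of_mem
      intro σ _
      constructor <;>
      · rintro ⟨f, hf, -⟩
        exact absurd (hf (show (0:Fin 3) < 1 by decide)) (by
          rw [Subsingleton.elim (f 0) (f 1)]; exact lt_irrefl _)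
    rw [hfil]
    have : ∀ σ : Equiv.Perm (Fin 1), q ^ invNum σ = 1 := by
      intro σ; rw [invNum_fin_one, pow_zero]
    rw [Finset.sum_congr rfl (fun σ _ => this σ), Finset.sum_const, Finset.card_univ]
    simp [Fintype.card_perm]
  | succ m hm ih =>
    rw [step m hm q, ih]
    rw [Nat.add_sub_cancel]
    obtain ⟨k, rfl⟩ : ∃ k, m = k + 1 := ⟨m - 1, (Nat.succ_pred_eq_of_pos hm).symm⟩
    rw [Nat.add_sub_cancel, Finset.prod_range_succ]
    ring
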